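/- (case E_6(3) of Theorem 6.4) Let V be a real inner product space and α_1, …, α_6 ∈ V vectors with ⟨α_p, α_p⟩ = 2 for all p, ⟨α_p, α_q⟩ = −1 whenever {p,q} is an edge of the E_6 Dynkin diagram (edges {1,3}, {3,4}, {4,5}, {5,6}, {2,4}), and ⟨α_p, α_q⟩ = 0 otherwise. Let δ ∈ V satisfy ⟨δ, α_p^∨⟩ = 1 for p ≠ 3 and ⟨δ, α_3^∨⟩ = 0 (so δ = −λ_3 + ρ for E_6(3) with special value s_0 = 1). Then the sequence (α_1, α_3) links −α_4 + δ to −2α_3 − α_1 − α_4 + δ: explicitly ⟨−α_4 + δ, α_1^∨⟩ = 1, ⟨s_{α_1}(−α_4 + δ), α_3^∨⟩ = 2, and s_{α_3} s_{α_1}(−α_4 + δ) = −2α_3 − α_1 − α_4 + δ. -/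
import Mathlib


open scoped RealInnerProductSpace

noncomputable section

variable {V : Type*} [NormedAddCommGroup V] [InnerProductSpace ℝ V]

/-- The coroot `β^∨ = 2β/⟨β,β⟩`. -/
def coroot (β : V) : V := (2 / ⟪β, β⟫) • β

/-- The reflection `s_β(v) = v − ⟨v, β^∨⟩ β`. -/
def sRefl (β v : V) : V := v - ⟪v, coroot β⟫ • β

/-- `Links (β_1, …, β_m) δ λ`: with `δ_0 = δ`, `δ_t = s_{β_t}(δ_{t−1})`, one has
`δ_m = λ` and `⟨δ_{t−1}, β_t^∨⟩ ∈ ℤ_{≥0}` for every `t`. -/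
inductive Links : List V → V → V → Prop
  | nil (δ : V) : Links [] δ δ
  | cons {β : V} {βs : List V} {δ lam : V} (c : ℕ)
      (hc : ⟪δ, coroot β⟫ = (c : ℝ)) (h : Links βs (sRefl β δ) lam) :
      Links (β :: βs) δ lam

/-- The edges of the `E_6` Dynkin diagram (in the Bourbaki labelling),
as an unordered relation. -/
def E6Edge (p q : ℕ) : Prop :=
  (p, q) ∈ ({(1, 3), (3, 1), (3, 4), (4, 3), (4, 5), (5, 4), (5, 6), (6, 5), (2, 4), (4, 2)} :
    Set (ℕ × ℕ))

/-- case `E_6(3)` of Theorem 6.4: if `α_1, …, α_6` realize the `E_6`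
Dynkin diagram and `δ` pairs to `1` with every simple coroot except `α_3^∨`, where it
pairs to `0` (i.e. `δ = −λ_3 + ρ` with special value `s_0 = 1`), then `(α_1, α_3)`
links `−α_4 + δ` to `−2α_3 − α_1 − α_4 + δ`. -/
theorem link_for_E6_3 (α : ℕ → V) (δ : V)
    (hnorm : ∀ p, 1 ≤ p → p ≤ 6 → ⟪α p, α p⟫ = 2)
    (hedge : ∀ p q, 1 ≤ p → p ≤ 6 → 1 ≤ q → q ≤ 6 → E6Edge p q → ⟪α p, α q⟫ = -1)
    (hnonedge : ∀ p q, 1 ≤ p → p ≤ 6 → 1 ≤ q → q ≤ 6 → p ≠ q → ¬ E6Edge p q →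
      ⟪α p, α q⟫ = 0)
    (hδ : ∀ p, 1 ≤ p → p ≤ 6 → p ≠ 3 → ⟪δ, coroot (α p)⟫ = 1)
    (hδ3 : ⟪δ, coroot (α 3)⟫ = 0) :
    Links [α 1, α 3] (-α 4 + δ) (-((2 : ℝ) • α 3) - α 1 - α 4 + δ) ∧
    ⟪-α 4 + δ, coroot (α 1)⟫ = 1 ∧
    ⟪sRefl (α 1) (-α 4 + δ), coroot (α 3)⟫ = 2 ∧
    sRefl (α 3) (sRefl (α 1) (-α 4 + δ)) = -((2 : ℝ) • α 3) - α 1 - α 4 + δ := by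

  have hc : ∀ p, 1 ≤ p → p ≤ 6 → coroot (α p) = α p := by
    intro p h1 h2
    rw [coroot, hnorm p h1 h2]
    norm_num
  have e13 : ⟪α 1, α 3⟫ = -1 := hedge 1 3 (by norm_num) (by norm_num) (by norm_num) (by norm_num) (by simp [E6Edge])
  have e43 : ⟪α 4, α 3⟫ = -1 := hedge 4 3 (by norm_num) (by norm_num) (by norm_num) (by norm_num) (by simp [E6Edge])
  have n41 : ⟪α 4, α 1⟫ = 0 := hnonedge 4 1 (by norm_num) (by norm_num) (by norm_num) (by norm_num) (by norm_num) (by simp [E6Edge])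
  have hδ1 : ⟪δ, α 1⟫ = 1 := by have := hδ 1 (by norm_num) (by norm_num) (by norm_num); rwa [hc 1 (by norm_num) (by norm_num)] at this
  have hδ3' : ⟪δ, α 3⟫ = 0 := by rwa [hc 3 (by norm_num) (by norm_num)] at hδ3
  have k1 : ⟪-α 4 + δ, coroot (α 1)⟫ = 1 := by
    rw [hc 1 (by norm_num) (by norm_num)]
    rw [inner_add_left, inner_neg_left, n41, hδ1]; ring
  have s1 : sRefl (α 1) (-α 4 + δ) = -α 1 - α 4 + δ := by
    rw [sRefl, k1, one_smul]; abel
  have k2 : ⟪sRefl (α 1) (-α 4 + δ), coroot (α 3)⟫ = 2 := by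
    rw [s1, hc 3 (by norm_num) (by norm_num), inner_add_left, inner_sub_left,
      inner_neg_left, e13, e43, hδ3']
    ring
  have s2 : sRefl (α 3) (sRefl (α 1) (-α 4 + δ)) = -((2 : ℝ) • α 3) - α 1 - α 4 + δ := by
    rw [sRefl, k2, s1]
    abel
  refine ⟨?_, k1, k2, s2⟩
  exact Links.cons 1 (by rw [k1]; norm_num)
    (Links.cons 2 (by rw [k2]; norm_num) (s2 ▸ Links.nil _))


end
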